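/- arXiv:0908.1257 — 3 statements merged into one kernel-verified Lean document; each statement's English description precedes it below -/
import Mathlib

section
/- Let 0 < α < 1, 1 < r < 1 + α, and ω(ξ) = ξ - ξ^r. There exists a constant C₂ > 0 (depending on r, α) such that for all sufficiently small ξ > 0: ∫₀^{ξ/2} [ω(ξ + 2η) + ω(ξ - 2η) - 2ω(ξ)] / η^{1+α} dη ≤ -C₂ ξ^{r-α}. -/
open Real Set MeasureTheory

/-- Bernoulli consequence: `a^r - b^r ≤ r * a^(r-1) * (a-b)` for `0 ≤ b ≤ a`, `1 ≤ r`. -/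
lemma aux_bern {r a b : ℝ} (hr : 1 ≤ r) (ha : 0 < a) (hb : 0 ≤ b) (hba : b ≤ a) :
    a ^ r - b ^ r ≤ r * a ^ (r - 1) * (a - b) := by
  have hs : (-1 : ℝ) ≤ b / a - 1 := by
    have : 0 ≤ b / a := div_nonneg hb ha.le
    linarith
  have H := one_add_mul_self_le_rpow_one_add hs hr
  rw [show 1 + (b / a - 1) = b / a by ring, Real.div_rpow hb ha.le] at H
  have hapos : (0 : ℝ) < a ^ r := Real.rpow_pos_of_pos ha r
  have hge : (1 + r * (b / a - 1)) * a ^ r ≤ b ^ r := by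
    calc (1 + r * (b / a - 1)) * a ^ r ≤ (b ^ r / a ^ r) * a ^ r :=
          mul_le_mul_of_nonneg_right H hapos.le
      _ = b ^ r := div_mul_cancel₀ _ hapos.ne'
  have hpow : a ^ (r - 1) = a ^ r / a := Real.rpow_sub_one ha.ne' r
  have key : a ^ r - b ^ r ≤ a ^ r - (1 + r * (b / a - 1)) * a ^ r := by linarith
  calc a ^ r - b ^ r ≤ a ^ r - (1 + r * (b / a - 1)) * a ^ r := key
    _ = r * a ^ (r - 1) * (a - b) := by rw [hpow]; field_simp; ring

/-- Spreading lemma from convexity: if `a+b = c+d` with `a ≤ c ≤ d ≤ b`, then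
`c^p + d^p ≤ a^p + b^p`. -/
lemma aux_spread {p : ℝ} (hp : 1 ≤ p) {a b c d : ℝ} (ha : 0 ≤ a) (hac : a ≤ c)
    (hcd : c ≤ d) (hdb : d ≤ b) (hsum : a + b = c + d) (hab : a < b) :
    c ^ p + d ^ p ≤ a ^ p + b ^ p := by
  have hb : (0 : ℝ) ≤ b := le_trans ha hab.le
  have hba : (0 : ℝ) < b - a := by linarith
  set lam := (b - c) / (b - a) with hlamdef
  set mu := (c - a) / (b - a) with hmudef
  have hlam : 0 ≤ lam := div_nonneg (by linarith) hba.le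
  have hmu : 0 ≤ mu := div_nonneg (by linarith) hba.le
  have hsum1 : lam + mu = 1 := by
    rw [hlamdef, hmudef, ← add_div, show b - c + (c - a) = b - a by ring,
      div_self hba.ne']
  have hconv := convexOn_rpow hp
  have h1 := hconv.2 (mem_Ici.2 ha) (mem_Ici.2 hb) hlam hmu hsum1
  have h2 := hconv.2 (mem_Ici.2 ha) (mem_Ici.2 hb) hmu hlam (by linarith)
  simp only [smul_eq_mul] at h1 h2
  have e1 : lam * a + mu * b = c := by
    rw [hlamdef, hmudef]; field_simp; ring
  have e2 : mu * a + lam * b = d := by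
    rw [hlamdef, hmudef]; field_simp; linear_combination (b - a) * hsum
  rw [e1] at h1
  rw [e2] at h2
  have key : lam * a ^ p + mu * b ^ p + (mu * a ^ p + lam * b ^ p) = a ^ p + b ^ p := by
    linear_combination (a ^ p + b ^ p) * hsum1
  linarith

theorem stmt14 (α r : ℝ) (hα0 : 0 < α) (hα1 : α < 1) (hr1 : 1 < r) (hr : r < 1 + α) :
    ∃ C₂ > 0, ∃ ξ₀ > 0, ∀ ξ : ℝ, 0 < ξ → ξ ≤ ξ₀ →
      ∫ η in Ioc (0:ℝ) (ξ / 2),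
          (((ξ + 2 * η) - (ξ + 2 * η) ^ r) + ((ξ - 2 * η) - (ξ - 2 * η) ^ r)
            - 2 * (ξ - ξ ^ r)) / η ^ (1 + α)
        ≤ -C₂ * ξ ^ (r - α) := by
  have hc₀ : (0:ℝ) < (1/2 : ℝ) ^ r + (3/2 : ℝ) ^ r - 2 := by
    have hsc := strictConvexOn_rpow hr1
    have h := hsc.2 (mem_Ici.2 (by norm_num : (0:ℝ) ≤ 1/2))
      (mem_Ici.2 (by norm_num : (0:ℝ) ≤ 3/2)) (by norm_num)
      (by norm_num : (0:ℝ) < 1/2) (by norm_num : (0:ℝ) < 1/2) (by norm_num)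
    simp only [smul_eq_mul] at h
    rw [show (1/2 : ℝ) * (1/2) + (1/2) * (3/2) = 1 by norm_num, Real.one_rpow] at h
    linarith
  set c₀ : ℝ := (1/2 : ℝ) ^ r + (3/2 : ℝ) ^ r - 2 with hc₀def
  refine ⟨c₀ / 4 * 2 ^ (1 + α), mul_pos (div_pos hc₀ (by norm_num)) (Real.rpow_pos_of_pos two_pos _),
    1, one_pos, ?_⟩
  intro ξ hξ _
  have hξ2 : (0:ℝ) < ξ / 2 := by linarith
  set F : ℝ → ℝ := fun η => ((ξ + 2 * η) ^ r + (ξ - 2 * η) ^ r - 2 * ξ ^ r) / η ^ (1 + α)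
    with hFdef
  -- Step A: rewrite the integrand as -F
  have hEq : ∀ η : ℝ,
      (((ξ + 2 * η) - (ξ + 2 * η) ^ r) + ((ξ - 2 * η) - (ξ - 2 * η) ^ r)
        - 2 * (ξ - ξ ^ r)) / η ^ (1 + α) = -F η := by
    intro η
    simp only [hFdef]
    rw [← neg_div]
    congr 1
    ring
  -- Step B: pointwise bounds
  have hF0 : ∀ η ∈ Ioc (0:ℝ) (ξ / 2), 0 ≤ F η := by
    intro η hη
    obtain ⟨hη0, hη2⟩ := hη
    have hnum : 2 * ξ ^ r ≤ (ξ + 2 * η) ^ r + (ξ - 2 * η) ^ r := by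
      have := aux_spread hr1.le (a := ξ - 2 * η) (b := ξ + 2 * η) (c := ξ) (d := ξ)
        (by linarith) (by linarith) le_rfl (by linarith) (by ring) (by linarith)
      linarith
    have hden : (0:ℝ) < η ^ (1 + α) := Real.rpow_pos_of_pos hη0 _
    rw [hFdef]
    exact div_nonneg (by linarith) hden.le
  have hFub : ∀ η ∈ Ioc (0:ℝ) (ξ / 2),
      F η ≤ (2 * r * (2 * ξ) ^ (r - 1)) * η ^ (-α) := by
    intro η hη
    obtain ⟨hη0, hη2⟩ := hη
    have hden : (0:ℝ) < η ^ (1 + α) := Real.rpow_pos_of_pos hη0 _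
    have hb1 : (ξ + 2 * η) ^ r - ξ ^ r ≤ r * (ξ + 2 * η) ^ (r - 1) * (2 * η) := by
      have := aux_bern hr1.le (a := ξ + 2 * η) (b := ξ) (by linarith) hξ.le (by linarith)
      calc (ξ + 2 * η) ^ r - ξ ^ r ≤ r * (ξ + 2 * η) ^ (r - 1) * (ξ + 2 * η - ξ) := this
        _ = r * (ξ + 2 * η) ^ (r - 1) * (2 * η) := by ring
    have hb2 : (ξ + 2 * η) ^ (r - 1) ≤ (2 * ξ) ^ (r - 1) :=
      Real.rpow_le_rpow (by linarith) (by linarith) (by linarith)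
    have hb3 : (ξ - 2 * η) ^ r ≤ ξ ^ r :=
      Real.rpow_le_rpow (by linarith) (by linarith) (by linarith)
    have hnum : (ξ + 2 * η) ^ r + (ξ - 2 * η) ^ r - 2 * ξ ^ r
        ≤ (2 * r * (2 * ξ) ^ (r - 1)) * η := by
      have hb2' : 2 * r * η * (ξ + 2 * η) ^ (r - 1) ≤ 2 * r * η * (2 * ξ) ^ (r - 1) :=
        mul_le_mul_of_nonneg_left hb2 (by positivity)
      nlinarith [hb1, hb3, hb2']
    have hmulinv : η ^ (-α) * η ^ (1 + α) = η := by
      rw [← Real.rpow_add hη0, show -α + (1 + α) = 1 by ring, Real.rpow_one]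
    rw [hFdef, div_le_iff₀ hden]
    calc (ξ + 2 * η) ^ r + (ξ - 2 * η) ^ r - 2 * ξ ^ r
        ≤ (2 * r * (2 * ξ) ^ (r - 1)) * η := hnum
      _ = 2 * r * (2 * ξ) ^ (r - 1) * η ^ (-α) * η ^ (1 + α) := by
          rw [mul_assoc (2 * r * (2 * ξ) ^ (r - 1)) (η ^ (-α)) (η ^ (1 + α)), hmulinv]
  -- Step C: integrability of F on Ioc 0 (ξ/2)
  have hmeasF : AEStronglyMeasurable F (volume.restrict (Ioc (0:ℝ) (ξ / 2))) := by
    apply Measurable.aestronglyMeasurable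
    apply Measurable.div
    · exact ((((Real.continuous_rpow_const (by linarith : (0:ℝ) ≤ r)).comp
        (continuous_const.add (continuous_const.mul continuous_id))).add
        ((Real.continuous_rpow_const (by linarith : (0:ℝ) ≤ r)).comp
        (continuous_const.sub (continuous_const.mul continuous_id)))).sub
        continuous_const).measurable
    · exact (Real.continuous_rpow_const (by linarith : (0:ℝ) ≤ 1 + α)).measurable
  have hIntDom : IntegrableOn (fun η : ℝ => (2 * r * (2 * ξ) ^ (r - 1)) * η ^ (-α))
      (Ioc (0:ℝ) (ξ / 2)) := by
    have h1 : IntervalIntegrable (fun η : ℝ => η ^ (-α)) volume 0 (ξ / 2) :=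
      intervalIntegral.intervalIntegrable_rpow' (by linarith)
    have h2 := (intervalIntegrable_iff_integrableOn_Ioc_of_le hξ2.le).1 h1
    exact h2.const_mul _
  have hInt : IntegrableOn F (Ioc (0:ℝ) (ξ / 2)) := by
    refine hIntDom.mono' hmeasF ?_
    refine (ae_restrict_iff' measurableSet_Ioc).2 (Filter.Eventually.of_forall ?_)
    intro η hη
    rw [Real.norm_eq_abs, abs_of_nonneg (hF0 η hη)]
    exact hFub η hη
  -- Step D: splitting and lower estimate
  have hsub1 : Ioc (0:ℝ) (ξ / 4) ⊆ Ioc (0:ℝ) (ξ / 2) := Ioc_subset_Ioc_right (by linarith)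
  have hsub2 : Ioc (ξ / 4) (ξ / 2) ⊆ Ioc (0:ℝ) (ξ / 2) := Ioc_subset_Ioc_left (by linarith)
  have hsplit : (∫ η in Ioc (0:ℝ) (ξ / 2), F η)
      = (∫ η in Ioc (0:ℝ) (ξ / 4), F η) + ∫ η in Ioc (ξ / 4) (ξ / 2), F η := by
    rw [← setIntegral_union (Ioc_disjoint_Ioc_of_le le_rfl) measurableSet_Ioc
      (hInt.mono_set hsub1) (hInt.mono_set hsub2),
      Ioc_union_Ioc_eq_Ioc (by linarith) (by linarith)]
  have h1 : (0:ℝ) ≤ ∫ η in Ioc (0:ℝ) (ξ / 4), F η :=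
    setIntegral_nonneg measurableSet_Ioc fun η hη => hF0 η (hsub1 hη)
  have hKpos : (0:ℝ) < c₀ * ξ ^ r * (ξ / 2) ^ (-(1 + α)) := by
    have := Real.rpow_pos_of_pos hξ r
    have := Real.rpow_pos_of_pos hξ2 (-(1 + α))
    positivity
  have hlow : ∀ η ∈ Ioc (ξ / 4) (ξ / 2), c₀ * ξ ^ r * (ξ / 2) ^ (-(1 + α)) ≤ F η := by
    intro η hη
    obtain ⟨hη4, hη2⟩ := hη
    have hη0 : (0:ℝ) < η := by linarith
    have hnum : c₀ * ξ ^ r ≤ (ξ + 2 * η) ^ r + (ξ - 2 * η) ^ r - 2 * ξ ^ r := by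
      have hs := aux_spread hr1.le (a := ξ - 2 * η) (b := ξ + 2 * η) (c := ξ / 2)
        (d := 3 * ξ / 2) (by linarith) (by linarith) (by linarith) (by linarith)
        (by ring) (by linarith)
      have e1 : (ξ / 2) ^ r = (1/2 : ℝ) ^ r * ξ ^ r := by
        rw [show ξ / 2 = (1/2 : ℝ) * ξ by ring, Real.mul_rpow (by norm_num) hξ.le]
      have e2 : (3 * ξ / 2) ^ r = (3/2 : ℝ) ^ r * ξ ^ r := by
        rw [show 3 * ξ / 2 = (3/2 : ℝ) * ξ by ring, Real.mul_rpow (by norm_num) hξ.le]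
      rw [e1, e2] at hs
      rw [hc₀def]
      nlinarith [Real.rpow_pos_of_pos hξ r]
    have hden : (0:ℝ) < η ^ (1 + α) := Real.rpow_pos_of_pos hη0 _
    have hdenle : η ^ (1 + α) ≤ (ξ / 2) ^ (1 + α) :=
      Real.rpow_le_rpow hη0.le hη2 (by linarith)
    have hrw : c₀ * ξ ^ r * (ξ / 2) ^ (-(1 + α)) = (c₀ * ξ ^ r) / (ξ / 2) ^ (1 + α) := by
      rw [Real.rpow_neg hξ2.le]
      exact (div_eq_mul_inv _ _).symm
    rw [hrw, hFdef]
    exact div_le_div₀ (by nlinarith [Real.rpow_pos_of_pos hξ r]) hnum hden hdenle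
  have h2 : (ξ / 4) * (c₀ * ξ ^ r * (ξ / 2) ^ (-(1 + α)))
      ≤ ∫ η in Ioc (ξ / 4) (ξ / 2), F η := by
    have hconst : (∫ _η in Ioc (ξ / 4) (ξ / 2), (c₀ * ξ ^ r * (ξ / 2) ^ (-(1 + α))))
        = (ξ / 4) * (c₀ * ξ ^ r * (ξ / 2) ^ (-(1 + α))) := by
      rw [setIntegral_const, measureReal_def, Real.volume_Ioc, smul_eq_mul,
        ENNReal.toReal_ofReal (by linarith)]
      ring_nf
    rw [← hconst]
    refine setIntegral_mono_on ?_ (hInt.mono_set hsub2) measurableSet_Ioc hlow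
    exact integrableOn_const (by rw [Real.volume_Ioc]; exact ENNReal.ofReal_ne_top)
  -- Step E: the key constant identity
  have hkey : (ξ / 4) * (c₀ * ξ ^ r * (ξ / 2) ^ (-(1 + α)))
      = (c₀ / 4 * 2 ^ (1 + α)) * ξ ^ (r - α) := by
    have e0 : (ξ / 2) ^ (-(1 + α)) = (ξ ^ (1 + α) / 2 ^ (1 + α))⁻¹ := by
      rw [Real.rpow_neg hξ2.le, Real.div_rpow hξ.le (by norm_num)]
    have e1 : ξ ^ (r - α) * ξ ^ (1 + α) = ξ * ξ ^ r := by
      rw [← Real.rpow_add hξ, show r - α + (1 + α) = r + 1 by ring, Real.rpow_add hξ,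
        Real.rpow_one]
      ring
    have hp1 : (0:ℝ) < ξ ^ (1 + α) := Real.rpow_pos_of_pos hξ _
    have hp2 : (0:ℝ) < (2:ℝ) ^ (1 + α) := Real.rpow_pos_of_pos two_pos _
    rw [e0]
    field_simp
    linear_combination -e1
  -- conclude
  calc ∫ η in Ioc (0:ℝ) (ξ / 2),
        (((ξ + 2 * η) - (ξ + 2 * η) ^ r) + ((ξ - 2 * η) - (ξ - 2 * η) ^ r)
          - 2 * (ξ - ξ ^ r)) / η ^ (1 + α)
      = ∫ η in Ioc (0:ℝ) (ξ / 2), -F η := by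
        exact integral_congr_ae (Filter.Eventually.of_forall fun η => hEq η)
    _ = -(∫ η in Ioc (0:ℝ) (ξ / 2), F η) := integral_neg _
    _ ≤ -((c₀ / 4 * 2 ^ (1 + α)) * ξ ^ (r - α)) := by
        rw [hsplit]
        have := h2
        rw [hkey] at this
        linarith
    _ = -(c₀ / 4 * 2 ^ (1 + α)) * ξ ^ (r - α) := by ring
end

section
/- Let ω be a modulus of continuity, differentiable on (0, ∞), and let u: ℝⁿ → ℝⁿ have modulus of continuity Ω (i.e. |u(x) - u(y)| ≤ Ω(|x-y|)). Suppose θ: ℝⁿ → ℝ is differentiable, has modulus of continuity ω, and there exist x ≠ y with θ(x) - θ(y) = ω(|x - y|). Then, writing ξ = |x - y|, one has u(x)·∇θ(x) - u(y)·∇θ(y) ≤ Ω(ξ) ω'(ξ). -/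
open Real Set

theorem stmt17 (n : ℕ) (ω Ω : ℝ → ℝ)
    (hcont : Continuous ω) (hmono : MonotoneOn ω (Ici 0))
    (hconc : ConcaveOn ℝ (Ici 0) ω) (h0 : ω 0 = 0)
    (hnonneg : ∀ x ∈ Ici (0:ℝ), 0 ≤ ω x)
    (hdiff : DifferentiableOn ℝ ω (Ioi 0))
    (hΩmono : MonotoneOn Ω (Ici 0)) (hΩnonneg : ∀ x ∈ Ici (0:ℝ), 0 ≤ Ω x)
    (u : EuclideanSpace ℝ (Fin n) → EuclideanSpace ℝ (Fin n))
    (hu : ∀ x y : EuclideanSpace ℝ (Fin n), ‖u x - u y‖ ≤ Ω ‖x - y‖)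
    (θ : EuclideanSpace ℝ (Fin n) → ℝ) (hθ : Differentiable ℝ θ)
    (hmoc : ∀ x y : EuclideanSpace ℝ (Fin n), |θ x - θ y| ≤ ω ‖x - y‖)
    (x y : EuclideanSpace ℝ (Fin n)) (hxy : x ≠ y)
    (htouch : θ x - θ y = ω ‖x - y‖) :
    inner ℝ (u x) (gradient θ x) - inner ℝ (u y) (gradient θ y)
      ≤ Ω ‖x - y‖ * deriv ω ‖x - y‖ := by
  set ξ := ‖x - y‖ with hξ
  have hξpos : 0 < ξ := by
    simpa [hξ, sub_eq_zero] using hxy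
  have hΩξ : 0 ≤ Ω ξ := hΩnonneg ξ hξpos.le
  -- gradient vs fderiv
  have hgrad : ∀ z v : EuclideanSpace ℝ (Fin n),
      (inner ℝ (u z) (gradient θ v) : ℝ) = fderiv ℝ θ v (u z) := by
    intro z v
    rw [real_inner_comm]
    simp [gradient, InnerProductSpace.toDual_symm_apply]
  -- the function g
  set g : ℝ → ℝ := fun h => θ (x + h • u x) - θ (y + h • u y) with hg
  have hgx : ∀ z : EuclideanSpace ℝ (Fin n),
      HasDerivAt (fun h : ℝ => θ (z + h • u z)) (fderiv ℝ θ z (u z)) 0 := by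
    intro z
    have h1 : HasDerivAt (fun h : ℝ => z + h • u z) (u z) 0 := by
      simpa using ((hasDerivAt_id (0:ℝ)).smul_const (u z)).const_add z
    have := ((hθ (z + (0:ℝ) • u z)).hasFDerivAt.comp_hasDerivAt 0 h1)
    rw [zero_smul, add_zero] at this
    exact this
  have hgd : HasDerivAt g (fderiv ℝ θ x (u x) - fderiv ℝ θ y (u y)) 0 :=
    (hgx x).sub (hgx y)
  -- the function f
  set f : ℝ → ℝ := fun h => ω (ξ + h * Ω ξ) with hf
  have hωξ : HasDerivAt ω (deriv ω ξ) ξ := by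
    have : DifferentiableAt ℝ ω ξ :=
      (hdiff ξ hξpos).differentiableAt (Ioi_mem_nhds hξpos)
    exact this.hasDerivAt
  have hfd : HasDerivAt f (Ω ξ * deriv ω ξ) 0 := by
    have h1 : HasDerivAt (fun h : ℝ => ξ + h * Ω ξ) (Ω ξ) 0 := by
      simpa using ((hasDerivAt_id (0:ℝ)).mul_const (Ω ξ)).const_add ξ
    have h2 : HasDerivAt ω (deriv ω ξ) ((fun h : ℝ => ξ + h * Ω ξ) 0) := by simpa using hωξ
    have := h2.comp 0 h1
    rw [mul_comm] at this
    exact this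
  -- g h ≤ f h for h ≥ 0
  have hle : ∀ h : ℝ, 0 ≤ h → g h ≤ f h := by
    intro h hh
    have hnorm : ‖(x + h • u x) - (y + h • u y)‖ ≤ ξ + h * Ω ξ := by
      have heq : (x + h • u x) - (y + h • u y) = (x - y) + h • (u x - u y) := by
        module
      rw [heq]
      calc ‖(x - y) + h • (u x - u y)‖ ≤ ‖x - y‖ + ‖h • (u x - u y)‖ := norm_add_le _ _
        _ = ξ + h * ‖u x - u y‖ := by
            rw [norm_smul, Real.norm_of_nonneg hh]
        _ ≤ ξ + h * Ω ξ := by gcongr; exact hu x y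
    show θ (x + h • u x) - θ (y + h • u y) ≤ ω (ξ + h * Ω ξ)
    calc θ (x + h • u x) - θ (y + h • u y)
        ≤ |θ (x + h • u x) - θ (y + h • u y)| := le_abs_self _
      _ ≤ ω ‖(x + h • u x) - (y + h • u y)‖ := hmoc _ _
      _ ≤ ω (ξ + h * Ω ξ) := hmono (norm_nonneg _)
          (by have := mul_nonneg hh hΩξ; simp only [mem_Ici]; linarith) hnorm
  -- equality at 0
  have heq0 : g 0 = f 0 := by simp [hg, hf, htouch, hξ]
  -- derivative comparison
  have key : fderiv ℝ θ x (u x) - fderiv ℝ θ y (u y) ≤ Ω ξ * deriv ω ξ := by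
    set φ : ℝ → ℝ := fun h => g h - f h with hφ
    have hφd : HasDerivAt φ ((fderiv ℝ θ x (u x) - fderiv ℝ θ y (u y)) - Ω ξ * deriv ω ξ) 0 :=
      hgd.sub hfd
    have hφ0 : φ 0 = 0 := by simp [hφ, heq0]
    have htend : Filter.Tendsto (slope φ 0) (nhdsWithin 0 (Ioi 0)) (nhds
        ((fderiv ℝ θ x (u x) - fderiv ℝ θ y (u y)) - Ω ξ * deriv ω ξ)) := by
      have := hasDerivAt_iff_tendsto_slope.1 hφd
      exact this.mono_left (nhdsWithin_mono _ (by intro a ha; simp at ha ⊢; exact ha.ne'))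
    have hnonpos : ((fderiv ℝ θ x (u x) - fderiv ℝ θ y (u y)) - Ω ξ * deriv ω ξ) ≤ 0 := by
      refine le_of_tendsto htend ?_
      filter_upwards [self_mem_nhdsWithin] with h hh
      have hh' : 0 < h := hh
      have : φ h ≤ 0 := sub_nonpos.2 (hle h hh'.le)
      rw [slope_def_field, hφ0]
      simp only [sub_zero]
      exact div_nonpos_of_nonpos_of_nonneg this hh'.le
    linarith
  rw [hgrad x x, hgrad y y]
  exact key
end

section
/- Let 0 < α < 1 and let ω: [0, ∞) → [0, ∞) be a modulus of continuity with ω(η) ≤ η for all η. Define Ω₁(ξ) = ∫₀^ξ ω(η)/η dη + ξ ∫_ξ^∞ ω(η)/η² dη and Ω₂[ν](ξ) = ∫₀^ξ ν(η)/η^α dη + ξ ∫_ξ^∞ ν(η)/η^{1+α} dη for a modulus ν. Then there is a constant C (depending only on α) such that Ω₂[Ω₁](ξ) ≤ C ( ξ^{1-α} ∫₀^ξ ω(η)/η dη + ξ ∫_ξ^∞ ω(η)/η^{α+1} dη ) for all ξ > 0, provided all integrals are finite. -/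
open Real Set MeasureTheory
open scoped ENNReal

noncomputable def Omega1 (ω : ℝ → ℝ) (ξ : ℝ) : ℝ :=
  (∫ η in Ioc (0:ℝ) ξ, ω η / η) + ξ * ∫ η in Ioi ξ, ω η / η ^ 2

noncomputable def Omega2 (α : ℝ) (ν : ℝ → ℝ) (ξ : ℝ) : ℝ :=
  (∫ η in Ioc (0:ℝ) ξ, ν η / η ^ α) + ξ * ∫ η in Ioi ξ, ν η / η ^ (1 + α)

open ENNReal in
lemma lint_swap {f g : ℝ → ℝ≥0∞} (hf : Measurable f) (hg : Measurable g)
    (S T : Set ℝ) {W : Set (ℝ × ℝ)} (hW : MeasurableSet W) :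
    ∫⁻ x in S, f x * ∫⁻ y in T ∩ {y | (x, y) ∈ W}, g y =
    ∫⁻ y in T, g y * ∫⁻ x in S ∩ {x | (x, y) ∈ W}, f x := by
  have hWx : ∀ x : ℝ, MeasurableSet {y | (x, y) ∈ W} :=
    fun x => hW.preimage (measurable_prodMk_left)
  have hWy : ∀ y : ℝ, MeasurableSet {x | (x, y) ∈ W} :=
    fun y => hW.preimage (measurable_prodMk_right)
  have hind : Measurable (W.indicator (1 : ℝ × ℝ → ℝ≥0∞)) :=
    measurable_one.indicator hW
  have keyx : ∀ x, f x * ∫⁻ y in T ∩ {y | (x, y) ∈ W}, g y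
      = ∫⁻ y in T, f x * g y * W.indicator 1 (x, y) := by
    intro x
    rw [Set.inter_comm, ← Measure.restrict_restrict (hWx x),
      ← lintegral_indicator (hWx x) g, ← lintegral_const_mul _
        (hg.indicator (hWx x))]
    congr 1; ext y
    by_cases h : (x, y) ∈ W <;>
      simp [Set.indicator, h, mul_assoc]
  have keyy : ∀ y, g y * ∫⁻ x in S ∩ {x | (x, y) ∈ W}, f x
      = ∫⁻ x in S, f x * g y * W.indicator 1 (x, y) := by
    intro y
    rw [Set.inter_comm, ← Measure.restrict_restrict (hWy y),
      ← lintegral_indicator (hWy y) f, ← lintegral_const_mul _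
        (hf.indicator (hWy y))]
    congr 1; ext x
    by_cases h : (x, y) ∈ W <;>
      simp [Set.indicator, h]; ring
  simp only [keyx, keyy]
  exact lintegral_lintegral_swap
    (((hf.comp measurable_fst).mul (hg.comp measurable_snd)).mul hind).aemeasurable

open ENNReal in
lemma lint_rpow_Ioc {a p : ℝ} (ha : 0 ≤ a) (hp : -1 < p) :
    ∫⁻ x in Ioc (0:ℝ) a, ENNReal.ofReal (x ^ p) = ENNReal.ofReal (a ^ (p + 1) / (p + 1)) := by
  have hint : IntegrableOn (fun x : ℝ => x ^ p) (Ioc 0 a) :=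
    (intervalIntegral.intervalIntegrable_rpow' hp (a := 0) (b := a)).1
  rw [← ofReal_integral_eq_lintegral_ofReal hint]
  · congr 1
    rw [← intervalIntegral.integral_of_le ha, integral_rpow (Or.inl hp),
      Real.zero_rpow (by linarith : p + 1 ≠ 0), sub_zero]
  · filter_upwards [ae_restrict_mem measurableSet_Ioc] with x hx
    exact Real.rpow_nonneg hx.1.le p

open ENNReal in
lemma lint_rpow_Ioi {a p : ℝ} (ha : 0 < a) (hp : p < -1) :
    ∫⁻ x in Ioi a, ENNReal.ofReal (x ^ p) = ENNReal.ofReal (a ^ (p + 1) / (-(p + 1))) := by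
  rw [← ofReal_integral_eq_lintegral_ofReal (integrableOn_Ioi_rpow_of_lt hp ha)]
  · rw [integral_Ioi_rpow_of_lt hp ha]
    congr 1
    rw [div_neg, neg_div]
  · filter_upwards [ae_restrict_mem measurableSet_Ioi] with x hx
    exact Real.rpow_nonneg (ha.trans hx).le p

theorem stmt18 (α : ℝ) (hα0 : 0 < α) (hα1 : α < 1) :
    ∃ C > 0, ∀ ω : ℝ → ℝ,
      Continuous ω → MonotoneOn ω (Ici 0) → ConcaveOn ℝ (Ici 0) ω → ω 0 = 0 →
      (∀ η : ℝ, 0 ≤ η → ω η ≤ η) → (∀ η ∈ Ici (0:ℝ), 0 ≤ ω η) →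
      ∀ ξ : ℝ, 0 < ξ →
      (∀ ξ' : ℝ, 0 < ξ' → IntegrableOn (fun η => ω η / η ^ 2) (Ioi ξ')) →
      (∀ ξ' : ℝ, 0 < ξ' → IntegrableOn (fun η => ω η / η ^ (1 + α)) (Ioi ξ')) →
      IntegrableOn (fun η => Omega1 ω η / η ^ α) (Ioc (0:ℝ) ξ) →
      IntegrableOn (fun η => Omega1 ω η / η ^ (1 + α)) (Ioi ξ) →
      Omega2 α (Omega1 ω) ξ ≤
        C * (ξ ^ (1 - α) * (∫ η in Ioc (0:ℝ) ξ, ω η / η)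
          + ξ * ∫ η in Ioi ξ, ω η / η ^ (α + 1)) := by

  classical
  have h1α : (0:ℝ) < 1 - α := by linarith
  have h2α : (0:ℝ) < 2 - α := by linarith
  refine ⟨1/α + 1/(1-α) + 1, by positivity, ?_⟩
  intro ω hωc hmono hconc hω0 hωle hωnn ξ hξ hI2 hIα hIΩ1 hIΩ2
  have hωm : Measurable ω := hωc.measurable
  have hωpos : ∀ σ : ℝ, 0 < σ → 0 ≤ ω σ := fun σ hσ => hωnn σ hσ.le
  -- basic ENNReal-valued integrands
  set w : ℝ → ℝ≥0∞ := fun σ => ENNReal.ofReal (ω σ / σ) with hwdef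
  set b : ℝ → ℝ≥0∞ := fun σ => ENNReal.ofReal (ω σ / σ ^ 2) with hbdef
  set y : ℝ → ℝ≥0∞ := fun σ => ENNReal.ofReal (ω σ / σ ^ (1+α)) with hydef
  have hwm : Measurable w := ENNReal.measurable_ofReal.comp (hωm.div measurable_id)
  have hbm : Measurable b :=
    ENNReal.measurable_ofReal.comp (hωm.div (measurable_id.pow_const 2))
  have hym : Measurable y :=
    ENNReal.measurable_ofReal.comp (hωm.div (Measurable.pow measurable_id measurable_const))
  have hr : ∀ c : ℝ, Measurable fun η : ℝ => ENNReal.ofReal (η ^ c) :=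
    fun c => ENNReal.measurable_ofReal.comp (Measurable.pow measurable_id measurable_const)
  set LA : ℝ → ℝ≥0∞ := fun x => ∫⁻ σ in Ioc (0:ℝ) x, w σ with hLAdef
  set LB : ℝ → ℝ≥0∞ := fun x => ∫⁻ σ in Ioi x, b σ with hLBdef
  set LY : ℝ≥0∞ := ∫⁻ σ in Ioi ξ, y σ with hLYdef
  have hLAmono : Monotone LA := fun x₁ x₂ h => lintegral_mono_set (Ioc_subset_Ioc_right h)
  have hLAm : Measurable LA := hLAmono.measurable
  have hLBanti : Antitone LB := fun x₁ x₂ h => lintegral_mono_set (Ioi_subset_Ioi h)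
  have hLBm : Measurable LB := hLBanti.measurable
  -- conversions between real integrals and lintegrals
  have hAint : ∀ x : ℝ, IntegrableOn (fun σ => ω σ / σ) (Ioc (0:ℝ) x) := by
    intro x
    apply Measure.integrableOn_of_bounded (M := 1) measure_Ioc_lt_top.ne
      (hωm.div measurable_id).aestronglyMeasurable
    filter_upwards [ae_restrict_mem measurableSet_Ioc] with σ hσ
    have h1 : 0 ≤ ω σ / σ := div_nonneg (hωpos σ hσ.1) hσ.1.le
    have h2 : ω σ / σ ≤ 1 := div_le_one_of_le₀ (hωle σ hσ.1.le) hσ.1.le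
    simp only [Real.norm_eq_abs, id_eq, Pi.div_apply]
    rw [abs_of_nonneg h1]
    exact h2
  have hAeq : ∀ x : ℝ, ENNReal.ofReal (∫ σ in Ioc (0:ℝ) x, ω σ / σ) = LA x := by
    intro x
    apply ofReal_integral_eq_lintegral_ofReal (hAint x)
    filter_upwards [ae_restrict_mem measurableSet_Ioc] with σ hσ
    exact div_nonneg (hωpos σ hσ.1) hσ.1.le
  have hBeq : ∀ x : ℝ, 0 < x → ENNReal.ofReal (∫ σ in Ioi x, ω σ / σ ^ 2) = LB x := by
    intro x hx
    apply ofReal_integral_eq_lintegral_ofReal (hI2 x hx)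
    filter_upwards [ae_restrict_mem measurableSet_Ioi] with σ hσ
    exact div_nonneg (hωpos σ (hx.trans hσ)) (pow_nonneg (hx.trans hσ).le 2)
  have hYeq : ENNReal.ofReal (∫ σ in Ioi ξ, ω σ / σ ^ (1+α)) = LY := by
    apply ofReal_integral_eq_lintegral_ofReal (hIα ξ hξ)
    filter_upwards [ae_restrict_mem measurableSet_Ioi] with σ hσ
    exact div_nonneg (hωpos σ (hξ.trans hσ)) (Real.rpow_nonneg (hξ.trans hσ).le _)
  -- nonnegativity of the building blocks
  have hApos : ∀ x : ℝ, 0 ≤ ∫ σ in Ioc (0:ℝ) x, ω σ / σ :=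
    fun x => setIntegral_nonneg measurableSet_Ioc
      (fun σ hσ => div_nonneg (hωpos σ hσ.1) hσ.1.le)
  have hBpos : ∀ x : ℝ, 0 < x → 0 ≤ ∫ σ in Ioi x, ω σ / σ ^ 2 :=
    fun x hx => setIntegral_nonneg measurableSet_Ioi
      (fun σ hσ => div_nonneg (hωpos σ (hx.trans hσ)) (pow_nonneg (hx.trans hσ).le 2))
  have hΩ1nn : ∀ η : ℝ, 0 < η → 0 ≤ Omega1 ω η :=
    fun η hη => add_nonneg (hApos η) (mul_nonneg hη.le (hBpos η hη))
  -- pointwise decomposition of the integrands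
  have hpt1 : ∀ η : ℝ, 0 < η →
      ENNReal.ofReal (Omega1 ω η / η ^ α)
        = ENNReal.ofReal (η ^ (-α)) * LA η + ENNReal.ofReal (η ^ (1-α)) * LB η := by
    intro η hη
    have e : Omega1 ω η / η ^ α
        = η ^ (-α) * (∫ σ in Ioc (0:ℝ) η, ω σ / σ)
          + η ^ (1-α) * (∫ σ in Ioi η, ω σ / σ ^ 2) := by
      rw [Omega1, add_div, div_eq_mul_inv, div_eq_mul_inv, ← Real.rpow_neg hη.le,
        show (1:ℝ) - α = 1 + (-α) by ring, Real.rpow_add hη, Real.rpow_one]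
      ring
    rw [e, ENNReal.ofReal_add (mul_nonneg (Real.rpow_nonneg hη.le _) (hApos η))
        (mul_nonneg (Real.rpow_nonneg hη.le _) (hBpos η hη)),
      ENNReal.ofReal_mul (Real.rpow_nonneg hη.le _),
      ENNReal.ofReal_mul (Real.rpow_nonneg hη.le _), hAeq η, hBeq η hη]
  have hpt2 : ∀ η : ℝ, 0 < η →
      ENNReal.ofReal (Omega1 ω η / η ^ (1+α))
        = ENNReal.ofReal (η ^ (-(1+α))) * LA η + ENNReal.ofReal (η ^ (-α)) * LB η := by
    intro η hη
    have e : Omega1 ω η / η ^ (1+α)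
        = η ^ (-(1+α)) * (∫ σ in Ioc (0:ℝ) η, ω σ / σ)
          + η ^ (-α) * (∫ σ in Ioi η, ω σ / σ ^ 2) := by
      rw [Omega1, add_div, div_eq_mul_inv, div_eq_mul_inv, ← Real.rpow_neg hη.le,
        show -α = 1 + (-(1+α)) by ring, Real.rpow_add hη, Real.rpow_one]
      ring
    rw [e, ENNReal.ofReal_add (mul_nonneg (Real.rpow_nonneg hη.le _) (hApos η))
        (mul_nonneg (Real.rpow_nonneg hη.le _) (hBpos η hη)),
      ENNReal.ofReal_mul (Real.rpow_nonneg hη.le _),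
      ENNReal.ofReal_mul (Real.rpow_nonneg hη.le _), hAeq η, hBeq η hη]
  -- the comparison sets
  set W : Set (ℝ × ℝ) := {p : ℝ × ℝ | p.1 < p.2} with hWdef
  have hW : MeasurableSet W := measurableSet_lt measurable_fst measurable_snd
  set W' : Set (ℝ × ℝ) := {p : ℝ × ℝ | p.2 < p.1} with hW'def
  have hW' : MeasurableSet W' := measurableSet_lt measurable_snd measurable_fst
  -- real pointwise estimates
  have R1 : ∀ σ : ℝ, ξ < σ → ω σ / σ ^ 2 ≤ ξ ^ (α-1) * (ω σ / σ ^ (1+α)) := by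
    intro σ hσ
    have hs : 0 < σ := hξ.trans hσ
    have h2 : σ ^ (2:ℕ) = σ ^ ((2:ℝ)) := by rw [← Real.rpow_natCast σ 2]; norm_num
    have hdiv : ∀ c : ℝ, ω σ / σ ^ c = ω σ * σ ^ (-c) := by
      intro c; rw [Real.rpow_neg hs.le, div_eq_mul_inv]
    rw [h2, hdiv, hdiv, show (-(2:ℝ)) = (α-1) + (-(1+α)) by ring, Real.rpow_add hs]
    calc ω σ * (σ^(α-1) * σ^(-(1+α))) = σ^(α-1) * (ω σ * σ^(-(1+α))) := by ring
      _ ≤ ξ^(α-1) * (ω σ * σ^(-(1+α))) := by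
          apply mul_le_mul_of_nonneg_right
            (Real.rpow_le_rpow_of_nonpos hξ hσ.le (by linarith))
          exact mul_nonneg (hωpos σ hs) (Real.rpow_nonneg hs.le _)
  have R2 : ∀ σ : ℝ, 0 < σ → σ ≤ ξ →
      (ω σ / σ ^ 2) * (σ^(2-α)/(2-α)) ≤ ξ^(1-α)/(2-α) * (ω σ / σ) := by
    intro σ h0 hle
    have h2 : σ ^ (2:ℕ) = σ ^ ((2:ℝ)) := by rw [← Real.rpow_natCast σ 2]; norm_num
    have hdiv : ∀ c : ℝ, ω σ / σ ^ c = ω σ * σ ^ (-c) := by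
      intro c; rw [Real.rpow_neg h0.le, div_eq_mul_inv]
    have hmerge : σ^(-(2:ℝ)) * σ^(2-α) = σ^(-(1:ℝ)) * σ^((1:ℝ)-α) := by
      rw [← Real.rpow_add h0, ← Real.rpow_add h0]; congr 1; ring
    rw [h2, hdiv]
    calc (ω σ * σ^(-(2:ℝ))) * (σ^(2-α)/(2-α))
        = ω σ * (σ^(-(2:ℝ)) * σ^(2-α)) / (2-α) := by ring
      _ = (ω σ * σ^(-(1:ℝ))) * σ^((1:ℝ)-α) / (2-α) := by rw [hmerge]; ring
      _ ≤ (ω σ * σ^(-(1:ℝ))) * ξ^((1:ℝ)-α) / (2-α) := by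
          have hb : σ^((1:ℝ)-α) ≤ ξ^((1:ℝ)-α) := Real.rpow_le_rpow h0.le hle (by linarith)
          have hnn : 0 ≤ ω σ * σ^(-(1:ℝ)) := mul_nonneg (hωpos σ h0) (Real.rpow_nonneg h0.le _)
          exact (div_le_div_iff_of_pos_right h2α).mpr (mul_le_mul_of_nonneg_left hb hnn)
      _ = ξ^(1-α)/(2-α) * (ω σ / σ) := by rw [Real.rpow_neg_one]; ring
  have R3 : ∀ σ : ℝ, 0 < σ → (ω σ / σ) * (σ^(-α)/α) = 1/α * (ω σ / σ ^ (1+α)) := by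
    intro σ hs
    have hdiv : ω σ / σ ^ ((1:ℝ)+α) = ω σ * σ ^ (-((1:ℝ)+α)) := by
      rw [Real.rpow_neg hs.le, div_eq_mul_inv]
    rw [hdiv, show -((1:ℝ)+α) = -1 + (-α) by ring, Real.rpow_add hs, Real.rpow_neg_one]
    ring
  have R4 : ∀ σ : ℝ, 0 < σ →
      (ω σ / σ ^ 2) * (σ^((1:ℝ)-α)/(1-α)) = 1/(1-α) * (ω σ / σ ^ (1+α)) := by
    intro σ hs
    have h2 : σ ^ (2:ℕ) = σ ^ ((2:ℝ)) := by rw [← Real.rpow_natCast σ 2]; norm_num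
    have hdiv : ∀ c : ℝ, ω σ / σ ^ c = ω σ * σ ^ (-c) := by
      intro c; rw [Real.rpow_neg hs.le, div_eq_mul_inv]
    rw [h2, hdiv, hdiv, show (-(2:ℝ)) = -((1:ℝ)+α) + (-((1:ℝ)-α)) by ring, Real.rpow_add hs]
    have h1 : σ ^ (-((1:ℝ)-α)) * σ ^ ((1:ℝ)-α) = 1 := by
      rw [← Real.rpow_add hs]; norm_num
    linear_combination (ω σ * σ ^ (-((1:ℝ)+α)) / (1-α)) * h1
  -- the four estimates
  have e1 : ∫⁻ η in Ioc (0:ℝ) ξ, ENNReal.ofReal (η ^ (-α)) * LA η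
      ≤ ENNReal.ofReal (1/(1-α)) * (ENNReal.ofReal (ξ^((1:ℝ)-α)) * LA ξ) := by
    calc ∫⁻ η in Ioc (0:ℝ) ξ, ENNReal.ofReal (η ^ (-α)) * LA η
        ≤ ∫⁻ η in Ioc (0:ℝ) ξ, ENNReal.ofReal (η ^ (-α)) * LA ξ := by
          apply setLIntegral_mono' measurableSet_Ioc
          intro η hη
          exact mul_le_mul_right (hLAmono hη.2) _
      _ = (∫⁻ η in Ioc (0:ℝ) ξ, ENNReal.ofReal (η ^ (-α))) * LA ξ :=
          lintegral_mul_const _ (hr _)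
      _ = ENNReal.ofReal (ξ ^ (-α+1) / (-α+1)) * LA ξ := by
          rw [lint_rpow_Ioc hξ.le (by linarith)]
      _ = ENNReal.ofReal (1/(1-α)) * (ENNReal.ofReal (ξ^((1:ℝ)-α)) * LA ξ) := by
          rw [← mul_assoc, ← ENNReal.ofReal_mul (by positivity)]
          congr 2
          rw [show -α+1 = (1:ℝ)-α by ring]
          ring
  have e2 : ∫⁻ η in Ioc (0:ℝ) ξ, ENNReal.ofReal (η ^ ((1:ℝ)-α)) * LB η
      ≤ ENNReal.ofReal (1/(2-α)) * (ENNReal.ofReal (ξ^((1:ℝ)-α)) * LA ξ)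
        + ENNReal.ofReal (1/(2-α)) * (ENNReal.ofReal ξ * LY) := by
    set Inner : ℝ → ℝ≥0∞ := fun η => ∫⁻ σ in Ioc (0:ℝ) ξ ∩ {σ | (η, σ) ∈ W}, b σ
      with hInnerdef
    have hInnerAnti : Antitone Inner := by
      intro x₁ x₂ h
      apply lintegral_mono_set
      apply Set.inter_subset_inter_right
      intro σ hσ
      exact lt_of_le_of_lt h hσ
    have hsplit : ∀ η ∈ Ioc (0:ℝ) ξ, LB η = Inner η + LB ξ := by
      intro η hη
      have h1 : Ioc (0:ℝ) ξ ∩ {σ | (η, σ) ∈ W} = Ioc η ξ := by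
        rw [show {σ | (η, σ) ∈ W} = Ioi η from rfl, Ioc_inter_Ioi,
          sup_eq_right.mpr hη.1.le]
      have hdisj : Disjoint (Ioc η ξ) (Ioi ξ) :=
        Set.disjoint_left.mpr fun σ h1 h2 => absurd h2 (not_lt.mpr h1.2)
      rw [hInnerdef]
      simp only
      rw [h1, hLBdef]
      simp only
      rw [← lintegral_union measurableSet_Ioi hdisj, Ioc_union_Ioi_eq_Ioi hη.2]
    calc ∫⁻ η in Ioc (0:ℝ) ξ, ENNReal.ofReal (η ^ ((1:ℝ)-α)) * LB η
        = ∫⁻ η in Ioc (0:ℝ) ξ, (ENNReal.ofReal (η ^ ((1:ℝ)-α)) * Inner η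
            + ENNReal.ofReal (η ^ ((1:ℝ)-α)) * LB ξ) := by
          apply setLIntegral_congr_fun measurableSet_Ioc
          intro η hη
          beta_reduce
          rw [hsplit η hη, mul_add]
      _ = (∫⁻ η in Ioc (0:ℝ) ξ, ENNReal.ofReal (η ^ ((1:ℝ)-α)) * Inner η)
          + ∫⁻ η in Ioc (0:ℝ) ξ, ENNReal.ofReal (η ^ ((1:ℝ)-α)) * LB ξ :=
          lintegral_add_left ((hr _).mul hInnerAnti.measurable) _
      _ ≤ ENNReal.ofReal (1/(2-α)) * (ENNReal.ofReal (ξ^((1:ℝ)-α)) * LA ξ)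
          + ENNReal.ofReal (1/(2-α)) * (ENNReal.ofReal ξ * LY) := by
          gcongr
          · -- swapped term
            rw [hInnerdef]
            simp only
            rw [lint_swap (hr ((1:ℝ)-α)) hbm (Ioc (0:ℝ) ξ) (Ioc (0:ℝ) ξ) hW]
            calc ∫⁻ σ in Ioc (0:ℝ) ξ, b σ * ∫⁻ η in Ioc (0:ℝ) ξ ∩ {η | (η, σ) ∈ W},
                  ENNReal.ofReal (η ^ ((1:ℝ)-α))
                ≤ ∫⁻ σ in Ioc (0:ℝ) ξ, ENNReal.ofReal (ξ^((1:ℝ)-α)/(2-α)) * w σ := by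
                  apply setLIntegral_mono' measurableSet_Ioc
                  intro σ hσ
                  have hset : Ioc (0:ℝ) ξ ∩ {η | (η, σ) ∈ W} = Ioo 0 σ := by
                    ext η
                    simp only [Set.mem_inter_iff, mem_Ioc, mem_Ioo, Set.mem_setOf_eq, hWdef]
                    exact ⟨fun h => ⟨h.1.1, h.2⟩, fun h => ⟨⟨h.1, h.2.le.trans hσ.2⟩, h.2⟩⟩
                  rw [hset, setLIntegral_congr Ioo_ae_eq_Ioc,
                    lint_rpow_Ioc hσ.1.le (by linarith), show (1:ℝ)-α+1 = 2-α by ring,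
                    hbdef, hwdef]
                  simp only
                  rw [← ENNReal.ofReal_mul (div_nonneg (hωpos σ hσ.1) (pow_nonneg hσ.1.le 2)),
                    ← ENNReal.ofReal_mul (div_nonneg (Real.rpow_nonneg hξ.le _) h2α.le)]
                  exact ENNReal.ofReal_le_ofReal (R2 σ hσ.1 hσ.2)
              _ = ENNReal.ofReal (ξ^((1:ℝ)-α)/(2-α)) * LA ξ := lintegral_const_mul _ hwm
              _ = ENNReal.ofReal (1/(2-α)) * (ENNReal.ofReal (ξ^((1:ℝ)-α)) * LA ξ) := by
                  rw [← mul_assoc, ← ENNReal.ofReal_mul (by positivity)]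
                  congr 2
                  ring
          · -- tail term
            calc ∫⁻ η in Ioc (0:ℝ) ξ, ENNReal.ofReal (η ^ ((1:ℝ)-α)) * LB ξ
                = (∫⁻ η in Ioc (0:ℝ) ξ, ENNReal.ofReal (η ^ ((1:ℝ)-α))) * LB ξ :=
                  lintegral_mul_const _ (hr _)
              _ = ENNReal.ofReal (ξ^((2:ℝ)-α)/(2-α)) * LB ξ := by
                  rw [lint_rpow_Ioc hξ.le (by linarith), show (1:ℝ)-α+1 = 2-α by ring]
              _ ≤ ENNReal.ofReal (ξ^((2:ℝ)-α)/(2-α)) * (ENNReal.ofReal (ξ^(α-1)) * LY) := by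
                  gcongr
                  rw [hLBdef]
                  simp only
                  calc ∫⁻ σ in Ioi ξ, b σ
                      ≤ ∫⁻ σ in Ioi ξ, ENNReal.ofReal (ξ^(α-1)) * y σ := by
                        apply setLIntegral_mono' measurableSet_Ioi
                        intro σ hσ
                        rw [hbdef, hydef]
                        simp only
                        rw [← ENNReal.ofReal_mul (Real.rpow_nonneg hξ.le _)]
                        exact ENNReal.ofReal_le_ofReal (R1 σ hσ)
                    _ = ENNReal.ofReal (ξ^(α-1)) * LY := lintegral_const_mul _ hym
              _ = ENNReal.ofReal (1/(2-α)) * (ENNReal.ofReal ξ * LY) := by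
                  rw [← mul_assoc, ← mul_assoc,
                    ← ENNReal.ofReal_mul (div_nonneg (Real.rpow_nonneg hξ.le _) h2α.le),
                    ← ENNReal.ofReal_mul (by positivity : (0:ℝ) ≤ 1/(2-α))]
                  congr 2
                  rw [show ξ^((2:ℝ)-α)/(2-α) * ξ^(α-1) = ξ^((2:ℝ)-α) * ξ^(α-1) / (2-α) by ring,
                    ← Real.rpow_add hξ, show (2:ℝ)-α+(α-1) = 1 by ring, Real.rpow_one]
                  ring
  have e3 : ∫⁻ η in Ioi ξ, ENNReal.ofReal (η ^ (-(1+α))) * LA η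
      ≤ ENNReal.ofReal (1/α) * (ENNReal.ofReal (ξ^(-α)) * LA ξ)
        + ENNReal.ofReal (1/α) * LY := by
    have hstep : ∀ η ∈ Ioi ξ, ENNReal.ofReal (η ^ (-(1+α))) * LA η
        = ENNReal.ofReal (η ^ (-(1+α)))
          * ∫⁻ σ in Ioi (0:ℝ) ∩ {σ | (η, σ) ∈ W'}, w σ := by
      intro η hη
      congr 1
      rw [show {σ | (η, σ) ∈ W'} = Iio η from rfl, Ioi_inter_Iio, hLAdef]
      simp only
      exact (setLIntegral_congr Ioo_ae_eq_Ioc).symm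
    calc ∫⁻ η in Ioi ξ, ENNReal.ofReal (η ^ (-(1+α))) * LA η
        = ∫⁻ η in Ioi ξ, ENNReal.ofReal (η ^ (-(1+α)))
            * ∫⁻ σ in Ioi (0:ℝ) ∩ {σ | (η, σ) ∈ W'}, w σ :=
          setLIntegral_congr_fun measurableSet_Ioi hstep
      _ = ∫⁻ σ in Ioi (0:ℝ), w σ * ∫⁻ η in Ioi ξ ∩ {η | (η, σ) ∈ W'},
            ENNReal.ofReal (η ^ (-(1+α))) :=
          lint_swap (hr _) hwm (Ioi ξ) (Ioi (0:ℝ)) hW'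
      _ = ∫⁻ σ in Ioi (0:ℝ), w σ * ENNReal.ofReal ((ξ ⊔ σ) ^ (-α) / α) := by
          apply setLIntegral_congr_fun measurableSet_Ioi
          intro σ hσ
          beta_reduce
          congr 1
          rw [show {η | (η, σ) ∈ W'} = Ioi σ from rfl, Ioi_inter_Ioi,
            lint_rpow_Ioi (lt_sup_iff.mpr (Or.inl hξ)) (by linarith : -(1+α) < -1),
            show -(1+α)+1 = -α by ring, neg_neg]
      _ = (∫⁻ σ in Ioc (0:ℝ) ξ, w σ * ENNReal.ofReal ((ξ ⊔ σ) ^ (-α) / α))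
          + ∫⁻ σ in Ioi ξ, w σ * ENNReal.ofReal ((ξ ⊔ σ) ^ (-α) / α) := by
          rw [← Ioc_union_Ioi_eq_Ioi hξ.le, lintegral_union measurableSet_Ioi
            (Set.disjoint_left.mpr fun σ h1 h2 => absurd h2 (not_lt.mpr h1.2))]
      _ = (∫⁻ σ in Ioc (0:ℝ) ξ, w σ * ENNReal.ofReal (ξ ^ (-α) / α))
          + ∫⁻ σ in Ioi ξ, ENNReal.ofReal (1/α) * y σ := by
          congr 1
          · apply setLIntegral_congr_fun measurableSet_Ioc
            intro σ hσ
            beta_reduce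
            rw [sup_eq_left.mpr hσ.2]
          · apply setLIntegral_congr_fun measurableSet_Ioi
            intro σ hσ
            beta_reduce
            rw [sup_eq_right.mpr (le_of_lt hσ), hwdef, hydef]
            simp only
            rw [← ENNReal.ofReal_mul (div_nonneg (hωpos σ (hξ.trans hσ)) (hξ.trans hσ).le),
              ← ENNReal.ofReal_mul (by positivity), R3 σ (hξ.trans hσ)]
      _ = ENNReal.ofReal (ξ ^ (-α) / α) * LA ξ + ENNReal.ofReal (1/α) * LY := by
          rw [lintegral_mul_const _ hwm, lintegral_const_mul _ hym, mul_comm (LA ξ)]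
      _ = ENNReal.ofReal (1/α) * (ENNReal.ofReal (ξ^(-α)) * LA ξ)
          + ENNReal.ofReal (1/α) * LY := by
          congr 1
          rw [← mul_assoc, ← ENNReal.ofReal_mul (by positivity)]
          congr 2
          ring
      _ ≤ ENNReal.ofReal (1/α) * (ENNReal.ofReal (ξ^(-α)) * LA ξ)
          + ENNReal.ofReal (1/α) * LY := le_rfl
  have e4 : ∫⁻ η in Ioi ξ, ENNReal.ofReal (η ^ (-α)) * LB η
      ≤ ENNReal.ofReal (1/(1-α)) * LY := by
    have hstep : ∀ η ∈ Ioi ξ, ENNReal.ofReal (η ^ (-α)) * LB η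
        = ENNReal.ofReal (η ^ (-α)) * ∫⁻ σ in Ioi ξ ∩ {σ | (η, σ) ∈ W}, b σ := by
      intro η hη
      congr 1
      rw [show {σ | (η, σ) ∈ W} = Ioi η from rfl, Ioi_inter_Ioi,
        sup_eq_right.mpr (le_of_lt hη), hLBdef]
    calc ∫⁻ η in Ioi ξ, ENNReal.ofReal (η ^ (-α)) * LB η
        = ∫⁻ η in Ioi ξ, ENNReal.ofReal (η ^ (-α))
            * ∫⁻ σ in Ioi ξ ∩ {σ | (η, σ) ∈ W}, b σ :=
          setLIntegral_congr_fun measurableSet_Ioi hstep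
      _ = ∫⁻ σ in Ioi ξ, b σ * ∫⁻ η in Ioi ξ ∩ {η | (η, σ) ∈ W}, ENNReal.ofReal (η ^ (-α)) :=
          lint_swap (hr _) hbm (Ioi ξ) (Ioi ξ) hW
      _ ≤ ∫⁻ σ in Ioi ξ, b σ * ENNReal.ofReal (σ^((1:ℝ)-α)/(1-α)) := by
          apply setLIntegral_mono' measurableSet_Ioi
          intro σ hσ
          apply mul_le_mul_right
          calc ∫⁻ η in Ioi ξ ∩ {η | (η, σ) ∈ W}, ENNReal.ofReal (η ^ (-α))
              ≤ ∫⁻ η in Ioc (0:ℝ) σ, ENNReal.ofReal (η ^ (-α)) := by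
                apply lintegral_mono_set
                rintro η ⟨h1, h2⟩
                exact ⟨hξ.trans h1, le_of_lt h2⟩
            _ = ENNReal.ofReal (σ^((1:ℝ)-α)/(1-α)) := by
                rw [lint_rpow_Ioc (hξ.trans hσ).le (by linarith), show -α+1 = (1:ℝ)-α by ring]
      _ = ∫⁻ σ in Ioi ξ, ENNReal.ofReal (1/(1-α)) * y σ := by
          apply setLIntegral_congr_fun measurableSet_Ioi
          intro σ hσ
          beta_reduce
          have hs : 0 < σ := hξ.trans hσ
          rw [hbdef, hydef]
          simp only
          rw [← ENNReal.ofReal_mul (div_nonneg (hωpos σ hs) (pow_nonneg hs.le 2)),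
            ← ENNReal.ofReal_mul (by positivity), R4 σ hs]
      _ = ENNReal.ofReal (1/(1-α)) * LY := lintegral_const_mul _ hym
  -- assemble
  have hxx : ENNReal.ofReal ξ * ENNReal.ofReal (ξ^(-α)) = ENNReal.ofReal (ξ^((1:ℝ)-α)) := by
    rw [← ENNReal.ofReal_mul hξ.le]
    congr 1
    rw [show (1:ℝ)-α = 1 + (-α) by ring, Real.rpow_add hξ, Real.rpow_one]
  have hdec1 : (∫⁻ η in Ioc (0:ℝ) ξ, ENNReal.ofReal (Omega1 ω η / η ^ α))
      = (∫⁻ η in Ioc (0:ℝ) ξ, ENNReal.ofReal (η ^ (-α)) * LA η)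
        + ∫⁻ η in Ioc (0:ℝ) ξ, ENNReal.ofReal (η ^ ((1:ℝ)-α)) * LB η := by
    rw [setLIntegral_congr_fun measurableSet_Ioc
      (fun η hη => hpt1 η hη.1)]
    exact lintegral_add_left ((hr _).mul hLAm) _
  have hdec2 : (∫⁻ η in Ioi ξ, ENNReal.ofReal (Omega1 ω η / η ^ (1+α)))
      = (∫⁻ η in Ioi ξ, ENNReal.ofReal (η ^ (-(1+α))) * LA η)
        + ∫⁻ η in Ioi ξ, ENNReal.ofReal (η ^ (-α)) * LB η := by
    rw [setLIntegral_congr_fun measurableSet_Ioi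
      (fun η hη => hpt2 η (hξ.trans hη))]
    exact lintegral_add_left ((hr _).mul hLAm) _
  -- convert the statement
  have hI1nn : 0 ≤ ∫ η in Ioc (0:ℝ) ξ, Omega1 ω η / η ^ α :=
    setIntegral_nonneg measurableSet_Ioc
      (fun η hη => div_nonneg (hΩ1nn η hη.1) (Real.rpow_nonneg hη.1.le _))
  have hI2nn : 0 ≤ ∫ η in Ioi ξ, Omega1 ω η / η ^ (1+α) :=
    setIntegral_nonneg measurableSet_Ioi
      (fun η hη => div_nonneg (hΩ1nn η (hξ.trans hη)) (Real.rpow_nonneg (hξ.trans hη).le _))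
  have hI1eq : ENNReal.ofReal (∫ η in Ioc (0:ℝ) ξ, Omega1 ω η / η ^ α)
      = ∫⁻ η in Ioc (0:ℝ) ξ, ENNReal.ofReal (Omega1 ω η / η ^ α) := by
    apply ofReal_integral_eq_lintegral_ofReal hIΩ1
    filter_upwards [ae_restrict_mem measurableSet_Ioc] with η hη
    exact div_nonneg (hΩ1nn η hη.1) (Real.rpow_nonneg hη.1.le _)
  have hI2eq : ENNReal.ofReal (∫ η in Ioi ξ, Omega1 ω η / η ^ (1+α))
      = ∫⁻ η in Ioi ξ, ENNReal.ofReal (Omega1 ω η / η ^ (1+α)) := by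
    apply ofReal_integral_eq_lintegral_ofReal hIΩ2
    filter_upwards [ae_restrict_mem measurableSet_Ioi] with η hη
    exact div_nonneg (hΩ1nn η (hξ.trans hη)) (Real.rpow_nonneg (hξ.trans hη).le _)
  have hRYe : (∫ η in Ioi ξ, ω η / η ^ (α+1)) = ∫ η in Ioi ξ, ω η / η ^ (1+α) := by
    congr 1
    funext η
    rw [add_comm]
  have hRXnn : 0 ≤ ∫ η in Ioc (0:ℝ) ξ, ω η / η := hApos ξ
  have hRYnn : 0 ≤ ∫ η in Ioi ξ, ω η / η ^ (1+α) :=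
    setIntegral_nonneg measurableSet_Ioi
      (fun σ hσ => div_nonneg (hωpos σ (hξ.trans hσ)) (Real.rpow_nonneg (hξ.trans hσ).le _))
  rw [Omega2, hRYe]
  rw [← ENNReal.ofReal_le_ofReal_iff (by positivity)]
  have hC2' : 1/(2-α) ≤ (1:ℝ) := by rw [div_le_one h2α]; linarith
  calc ENNReal.ofReal ((∫ η in Ioc (0:ℝ) ξ, Omega1 ω η / η ^ α)
        + ξ * ∫ η in Ioi ξ, Omega1 ω η / η ^ (1+α))
      = (∫⁻ η in Ioc (0:ℝ) ξ, ENNReal.ofReal (Omega1 ω η / η ^ α))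
        + ENNReal.ofReal ξ * ∫⁻ η in Ioi ξ, ENNReal.ofReal (Omega1 ω η / η ^ (1+α)) := by
        rw [ENNReal.ofReal_add hI1nn (mul_nonneg hξ.le hI2nn), ENNReal.ofReal_mul hξ.le,
          hI1eq, hI2eq]
    _ = ((∫⁻ η in Ioc (0:ℝ) ξ, ENNReal.ofReal (η ^ (-α)) * LA η)
          + ∫⁻ η in Ioc (0:ℝ) ξ, ENNReal.ofReal (η ^ ((1:ℝ)-α)) * LB η)
        + (ENNReal.ofReal ξ * (∫⁻ η in Ioi ξ, ENNReal.ofReal (η ^ (-(1+α))) * LA η)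
          + ENNReal.ofReal ξ * ∫⁻ η in Ioi ξ, ENNReal.ofReal (η ^ (-α)) * LB η) := by
        rw [hdec1, hdec2, mul_add]
    _ ≤ (ENNReal.ofReal (1/(1-α)) * (ENNReal.ofReal (ξ^((1:ℝ)-α)) * LA ξ)
          + (ENNReal.ofReal (1/(2-α)) * (ENNReal.ofReal (ξ^((1:ℝ)-α)) * LA ξ)
            + ENNReal.ofReal (1/(2-α)) * (ENNReal.ofReal ξ * LY)))
        + (ENNReal.ofReal ξ * (ENNReal.ofReal (1/α) * (ENNReal.ofReal (ξ^(-α)) * LA ξ)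
            + ENNReal.ofReal (1/α) * LY)
          + ENNReal.ofReal ξ * (ENNReal.ofReal (1/(1-α)) * LY)) := by
        exact add_le_add (add_le_add e1 e2) (add_le_add (mul_le_mul_right e3 _)
          (mul_le_mul_right e4 _))
    _ = (ENNReal.ofReal (1/(1-α)) + ENNReal.ofReal (1/(2-α)) + ENNReal.ofReal (1/α))
          * (ENNReal.ofReal (ξ^((1:ℝ)-α)) * LA ξ)
        + (ENNReal.ofReal (1/(2-α)) + ENNReal.ofReal (1/α) + ENNReal.ofReal (1/(1-α)))
          * (ENNReal.ofReal ξ * LY) := by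
        have : ENNReal.ofReal ξ * (ENNReal.ofReal (1/α)
            * (ENNReal.ofReal (ξ^(-α)) * LA ξ))
            = ENNReal.ofReal (1/α) * (ENNReal.ofReal (ξ^((1:ℝ)-α)) * LA ξ) := by
          rw [← hxx]; ring
        rw [mul_add, this]
        ring
    _ ≤ ENNReal.ofReal (1/α + 1/(1-α) + 1) * (ENNReal.ofReal (ξ^((1:ℝ)-α)) * LA ξ)
        + ENNReal.ofReal (1/α + 1/(1-α) + 1) * (ENNReal.ofReal ξ * LY) := by
        gcongr
        · rw [← ENNReal.ofReal_add (by positivity) (by positivity),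
            ← ENNReal.ofReal_add (by positivity) (by positivity)]
          apply ENNReal.ofReal_le_ofReal
          linarith
        · rw [← ENNReal.ofReal_add (by positivity) (by positivity),
            ← ENNReal.ofReal_add (by positivity) (by positivity)]
          apply ENNReal.ofReal_le_ofReal
          linarith
    _ = ENNReal.ofReal ((1/α + 1/(1-α) + 1) * (ξ^((1:ℝ)-α)
          * (∫ η in Ioc (0:ℝ) ξ, ω η / η)
        + ξ * ∫ η in Ioi ξ, ω η / η ^ (1+α))) := by
        rw [← hAeq ξ, ← hYeq]
        rw [ENNReal.ofReal_mul (by positivity), ENNReal.ofReal_add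
          (mul_nonneg (Real.rpow_nonneg hξ.le _) hRXnn) (mul_nonneg hξ.le hRYnn),
          ENNReal.ofReal_mul (Real.rpow_nonneg hξ.le _), ENNReal.ofReal_mul hξ.le,
          mul_add]
end
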